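/- Under the standing assumptions, ∫_ℝ |k|^{-1/2}·‖∂_y ω_k‖_{L²_y([-1,1])} dk ≲ ν^{-1/2}·𝓓₁^{1/2}. (Third estimate of Lemma 3.1.) -/

import Mathlib

open MeasureTheory Set Filter Topology
open scoped ENNReal

noncomputable section

/-- `L²` norm over `y ∈ [-1,1]`. -/
def L2y (f : ℝ → ℂ) : ℝ := (∫ y in Set.Icc (-1 : ℝ) 1, ‖f y‖ ^ 2) ^ ((1 : ℝ) / 2)

/-- `L^∞` norm over `y ∈ [-1,1]`. -/
def Linfy (f : ℝ → ℂ) : ℝ := ⨆ y : Set.Icc (-1 : ℝ) 1, ‖f (y : ℝ)‖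

/-- `L²([-1,1])` inner product `⟨f,g⟩ = ∫ conj (f y) * g y dy`. -/
def ipy (f g : ℝ → ℂ) : ℂ :=
  ∫ y in Set.Icc (-1 : ℝ) 1, (starRingEnd ℂ) (f y) * g y

/-- The rate `λ_k`. -/
def lamf (ν k : ℝ) : ℝ :=
  if ν ≤ |k| then ν ^ ((1 : ℝ) / 3) * |k| ^ ((2 : ℝ) / 3) else ν

/-- The weight `α(k)`. -/
def alphf (ν k : ℝ) : ℝ :=
  if ν ≤ |k| then ν ^ ((2 : ℝ) / 3) * |k| ^ (-((2 : ℝ) / 3)) else 1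

/-- The weight `β(k)`. -/
def betaf (ν k : ℝ) : ℝ :=
  if ν ≤ |k| then ν ^ ((1 : ℝ) / 3) * |k| ^ (-((4 : ℝ) / 3)) else 0

/-- The frequency weight `W(k) = e^{2cλ_k t}⟨k⟩^{2m}⟨k⁻¹⟩^{2ε}`. -/
def Wf (ν m ε c t k : ℝ) : ℝ :=
  Real.exp (2 * c * lamf ν k * t) * (1 + k ^ 2) ^ m * (1 + k⁻¹ ^ 2) ^ ε

/-- `‖∇_k f‖²_{L²} = k²‖f‖²_{L²} + ‖∂_y f‖²_{L²}` (with `df = ∂_y f`). -/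
def gradSq (k : ℝ) (f df : ℝ → ℂ) : ℝ :=
  k ^ 2 * (L2y f) ^ 2 + (L2y df) ^ 2

/-- The weighted energy `𝓔`. -/
def EEn (ν m ε c t : ℝ) (ω dω : ℝ → ℝ → ℂ) : ℝ≥0∞ :=
  ∫⁻ k : ℝ, ENNReal.ofReal
    (Wf ν m ε c t k * ((L2y (ω k)) ^ 2 + alphf ν k * (L2y (dω k)) ^ 2))

/-- The dissipation functional `𝓓₁`. -/
def D1n (ν m ε c t : ℝ) (ω dω : ℝ → ℝ → ℂ) : ℝ≥0∞ :=
  ∫⁻ k : ℝ, ENNReal.ofReal (Wf ν m ε c t k * (ν * gradSq k (ω k) (dω k)))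

/-- The dissipation functional `𝓓₂`. -/
def D2n (ν m ε c t : ℝ) (dω d2ω : ℝ → ℝ → ℂ) : ℝ≥0∞ :=
  ∫⁻ k : ℝ, ENNReal.ofReal (Wf ν m ε c t k * (ν * alphf ν k * gradSq k (dω k) (d2ω k)))

/-- The dissipation functional `𝓓₃`. -/
def D3n (ν m ε c t : ℝ) (ω : ℝ → ℝ → ℂ) : ℝ≥0∞ :=
  ∫⁻ k : ℝ, ENNReal.ofReal (Wf ν m ε c t k * (lamf ν k * (L2y (ω k)) ^ 2))

/-- The dissipation functional `𝓓₄`. -/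
def D4n (ν m ε c t : ℝ) (φ dφ : ℝ → ℝ → ℂ) : ℝ≥0∞ :=
  ∫⁻ k : ℝ, ENNReal.ofReal (Wf ν m ε c t k * (k ^ 2 * gradSq k (φ k) (dφ k)))

/-- The dissipation functional `𝓓₅`. -/
def D5n (ν m ε c t : ℝ) (dφ d2φ : ℝ → ℝ → ℂ) : ℝ≥0∞ :=
  ∫⁻ k : ℝ, ENNReal.ofReal (Wf ν m ε c t k * (alphf ν k * k ^ 2 * gradSq k (dφ k) (d2φ k)))

namespace Lemma31Aux

lemma L2y_nonneg (f : ℝ → ℂ) : 0 ≤ L2y f :=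
  Real.rpow_nonneg (integral_nonneg fun y => by positivity) _

lemma gradSq_nonneg (k : ℝ) (f df : ℝ → ℂ) : 0 ≤ gradSq k f df := by
  have h1 := L2y_nonneg f; have h2 := L2y_nonneg df
  unfold gradSq; positivity

lemma Wf_pos (ν m ε c t k : ℝ) : 0 < Wf ν m ε c t k := by
  unfold Wf
  have h1 : (0:ℝ) < 1 + k ^ 2 := by positivity
  have h2 : (0:ℝ) < 1 + k⁻¹ ^ 2 := by positivity
  positivity

lemma lamf_nonneg {ν : ℝ} (hν : 0 ≤ ν) (k : ℝ) : 0 ≤ lamf ν k := by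
  unfold lamf; split
  · positivity
  · exact hν

/-- The key pointwise weight inequality `|k|⁻¹ ≤ h k * W k`. -/
lemma key_hW {ν m ε c t : ℝ} (hν : 0 ≤ ν) (hc : 0 ≤ c) (ht : 0 ≤ t) {k : ℝ} (hk : k ≠ 0) :
    |k|⁻¹ ≤ (|k| ^ (2*ε-1) * (1+k^2) ^ (-(m+ε))) * Wf ν m ε c t k := by
  have ha : (0:ℝ) < |k| := abs_pos.mpr hk
  have hb : (0:ℝ) < 1 + k ^ 2 := by positivity
  have hk2 : (0:ℝ) < k ^ 2 := by positivity
  have hik : (1 + k⁻¹ ^ 2) = (1 + k ^ 2) * (k^2)⁻¹ := by field_simp; ring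
  have hlam := lamf_nonneg hν k
  have hexp : (1:ℝ) ≤ Real.exp (2*c*lamf ν k*t) := Real.one_le_exp (by positivity)
  have habs : ((k^2:ℝ)) ^ ε = |k| ^ (2*ε) := by
    rw [← sq_abs, ← Real.rpow_natCast |k| 2, ← Real.rpow_mul ha.le]
    norm_num
  have hP : (|k| ^ (2*ε-1) * (1+k^2) ^ (-(m+ε))) * ((1+k^2) ^ m * (1+k⁻¹^2) ^ ε) = |k|⁻¹ := by
    rw [hik, Real.mul_rpow hb.le (by positivity), Real.inv_rpow hk2.le, habs]
    have e1 : |k| ^ (2*ε-1) * (|k| ^ (2*ε))⁻¹ = |k|⁻¹ := by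
      rw [← Real.rpow_neg ha.le, ← Real.rpow_add ha, show 2*ε-1 + -(2*ε) = -1 by ring,
        Real.rpow_neg_one]
    have e2 : (1+k^2:ℝ) ^ (-(m+ε)) * ((1+k^2) ^ m * (1+k^2) ^ ε) = 1 := by
      rw [← Real.rpow_add hb, ← Real.rpow_add hb, show -(m+ε)+(m+ε) = 0 by ring, Real.rpow_zero]
    calc (|k| ^ (2*ε-1) * (1+k^2) ^ (-(m+ε))) * ((1+k^2) ^ m * ((1+k^2) ^ ε * (|k| ^ (2*ε))⁻¹))
        = (|k| ^ (2*ε-1) * (|k| ^ (2*ε))⁻¹) *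
            ((1+k^2) ^ (-(m+ε)) * ((1+k^2) ^ m * (1+k^2) ^ ε)) := by ring
      _ = |k|⁻¹ * 1 := by rw [e1, e2]
      _ = |k|⁻¹ := mul_one _
  have hW : (1+k^2:ℝ) ^ m * (1+k⁻¹^2) ^ ε ≤ Wf ν m ε c t k := by
    unfold Wf
    have h2 : (0:ℝ) ≤ (1+k^2) ^ m * (1+k⁻¹^2) ^ ε := by positivity
    rw [mul_assoc]
    exact le_mul_of_one_le_left h2 hexp
  calc |k|⁻¹ = (|k| ^ (2*ε-1) * (1+k^2) ^ (-(m+ε))) * ((1+k^2) ^ m * (1+k⁻¹^2) ^ ε) := hP.symm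
    _ ≤ (|k| ^ (2*ε-1) * (1+k^2) ^ (-(m+ε))) * Wf ν m ε c t k :=
        mul_le_mul_of_nonneg_left hW (by positivity)

lemma measurable_h (m ε : ℝ) :
    Measurable fun k : ℝ => |k| ^ (2*ε-1) * (1+k^2) ^ (-(m+ε)) :=
  (measurable_abs.pow measurable_const).mul
    ((measurable_const.add (measurable_id.pow_const 2)).pow measurable_const)

/-- Finiteness of the constant integral. -/
lemma finI {m ε : ℝ} (hm : 1 < m) (hε0 : 0 < ε) :
    (∫⁻ k : ℝ, ENNReal.ofReal (|k| ^ (2*ε-1) * (1+k^2) ^ (-(m+ε)))) < ⊤ := by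
  set F : ℝ → ℝ≥0∞ := fun k => ENNReal.ofReal (|k| ^ (2*ε-1) * (1+k^2) ^ (-(m+ε))) with hF
  have hFeven : ∀ k, F (-k) = F k := by
    intro k; simp only [hF, abs_neg, neg_sq]
  have hIci : (∫⁻ k in Ici (0:ℝ), F k) < ⊤ := by
    have hsub : Ici (0:ℝ) = Icc 0 1 ∪ Ioi 1 := (Icc_union_Ioi_eq_Ici (by norm_num)).symm
    have hdisj : Disjoint (Icc (0:ℝ) 1) (Ioi 1) := by
      rw [Set.disjoint_left]; intro x hx hx'; exact absurd hx.2 (not_le.mpr hx')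
    rw [hsub, lintegral_union measurableSet_Ioi hdisj]
    have hp1 : (∫⁻ k in Icc (0:ℝ) 1, F k) < ⊤ := by
      have hint : IntegrableOn (fun k : ℝ => k ^ (2*ε-1)) (Icc (0:ℝ) 1) := by
        rw [integrableOn_Icc_iff_integrableOn_Ioo]
        exact (intervalIntegral.integrableOn_Ioo_rpow_iff zero_lt_one).mpr (by linarith)
      refine lt_of_le_of_lt ?_ hint.lintegral_lt_top
      refine setLIntegral_mono' measurableSet_Icc fun k hk => ?_
      apply ENNReal.ofReal_le_ofReal
      rw [abs_of_nonneg hk.1]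
      have h1 : (1+k^2:ℝ) ^ (-(m+ε)) ≤ 1 :=
        Real.rpow_le_one_of_one_le_of_nonpos (by nlinarith [sq_nonneg k]) (by linarith)
      calc k ^ (2*ε-1) * (1+k^2) ^ (-(m+ε)) ≤ k ^ (2*ε-1) * 1 :=
            mul_le_mul_of_nonneg_left h1 (Real.rpow_nonneg hk.1 _)
        _ = k ^ (2*ε-1) := mul_one _
    have hp2 : (∫⁻ k in Ioi (1:ℝ), F k) < ⊤ := by
      have hint : IntegrableOn (fun k : ℝ => k ^ (-1-2*m)) (Ioi (1:ℝ)) :=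
        integrableOn_Ioi_rpow_of_lt (by linarith) zero_lt_one
      refine lt_of_le_of_lt ?_ hint.lintegral_lt_top
      refine setLIntegral_mono' measurableSet_Ioi fun k hk => ?_
      apply ENNReal.ofReal_le_ofReal
      have hk0 : (0:ℝ) < k := lt_trans zero_lt_one hk
      rw [abs_of_nonneg hk0.le]
      have h1 : (1+k^2:ℝ) ^ (-(m+ε)) ≤ (k^2) ^ (-(m+ε)) :=
        Real.rpow_le_rpow_of_nonpos (by positivity) (by nlinarith) (by linarith)
      have h2 : ((k^2:ℝ)) ^ (-(m+ε)) = k ^ (-(2*(m+ε))) := by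
        rw [← Real.rpow_natCast k 2, ← Real.rpow_mul hk0.le]
        norm_num; ring_nf
      calc k ^ (2*ε-1) * (1+k^2) ^ (-(m+ε)) ≤ k ^ (2*ε-1) * k ^ (-(2*(m+ε))) := by
            rw [← h2]; exact mul_le_mul_of_nonneg_left h1 (Real.rpow_nonneg hk0.le _)
        _ = k ^ (-1-2*m) := by
            rw [← Real.rpow_add hk0, show 2*ε-1 + -(2*(m+ε)) = -1-2*m by ring]
    exact ENNReal.add_lt_top.mpr ⟨hp1, hp2⟩
  have hIic : (∫⁻ k in Iic (0:ℝ), F k) = ∫⁻ k in Ici (0:ℝ), F k := by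
    have hemb : MeasurableEmbedding (fun k : ℝ => -k) :=
      (Homeomorph.neg ℝ).measurableEmbedding
    have hmp : MeasurePreserving (fun k : ℝ => -k) volume volume :=
      Measure.measurePreserving_neg _
    have hthis := hmp.setLIntegral_comp_emb hemb F (Ici (0:ℝ))
    have himg : (fun k : ℝ => -k) '' (Ici (0:ℝ)) = Iic 0 := by
      ext x
      simp only [Set.mem_image, Set.mem_Ici, Set.mem_Iic]
      constructor
      · rintro ⟨y, hy, rfl⟩; linarith
      · intro hx; exact ⟨-x, by linarith, by ring⟩
    rw [himg] at hthis
    simp only [hFeven] at hthis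
    exact hthis.symm
  have hsplit : (∫⁻ k : ℝ, F k) = (∫⁻ k in Iic (0:ℝ), F k) + ∫⁻ k in Ioi (0:ℝ), F k := by
    rw [← lintegral_add_compl F measurableSet_Iic, compl_Iic]
  rw [hsplit, hIic]
  exact ENNReal.add_lt_top.mpr ⟨hIci, lt_of_le_of_lt (lintegral_mono_set Ioi_subset_Ici_self) hIci⟩

lemma measurable_L2y_comp {ω : ℝ → ℝ → ℂ} (hω : Measurable (Function.uncurry ω)) :
    Measurable fun k => L2y (ω k) := by
  have h1 : StronglyMeasurable fun p : ℝ × ℝ => ‖Function.uncurry ω p‖ ^ 2 :=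
    (hω.norm.pow_const 2).stronglyMeasurable
  have h2 : StronglyMeasurable fun k : ℝ =>
      ∫ y in Icc (-1:ℝ) 1, ‖ω k y‖ ^ 2 :=
    h1.integral_prod_right'
  exact h2.measurable.pow measurable_const

lemma measurable_Wf (ν m ε c t : ℝ) : Measurable fun k => Wf ν m ε c t k := by
  have hlam : Measurable (lamf ν) := by
    unfold lamf
    exact Measurable.ite (measurableSet_le measurable_const measurable_abs)
      (measurable_const.mul (measurable_abs.pow measurable_const)) measurable_const
  unfold Wf
  exact (((measurable_const.mul hlam).mul measurable_const).exp.mul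
      ((measurable_const.add (measurable_id.pow_const 2)).pow measurable_const)).mul
      ((measurable_const.add (measurable_inv.pow_const 2)).pow measurable_const)

end Lemma31Aux

open Lemma31Aux in
theorem lemma31_third (m ε : ℝ) (hm : 1 < m) (hε : ε ∈ Set.Ioo (0 : ℝ) (1 / 12)) :
    ∃ C : ℝ, 0 < C ∧
      ∀ (ν c t : ℝ), ν ∈ Set.Ioo (0 : ℝ) 1 → 0 < c → 0 ≤ t →
      ∀ (ω dω d2ω φ dφ d2φ : ℝ → ℝ → ℂ),
      Measurable (Function.uncurry ω) → Measurable (Function.uncurry dω) →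
      Measurable (Function.uncurry d2ω) → Measurable (Function.uncurry φ) →
      Measurable (Function.uncurry dφ) → Measurable (Function.uncurry d2φ) →
      (∀ k : ℝ, ω k (-1) = 0 ∧ ω k 1 = 0) →
      (∀ k : ℝ, ∀ y ∈ Set.Icc (-1 : ℝ) 1,
        ω k y = ω k (-1) + ∫ s in (-1 : ℝ)..y, dω k s) →
      (∀ k : ℝ, ∀ y ∈ Set.Icc (-1 : ℝ) 1,
        dω k y = dω k (-1) + ∫ s in (-1 : ℝ)..y, d2ω k s) →
      (∀ k : ℝ, MemLp (d2ω k) 2 (volume.restrict (Set.Icc (-1 : ℝ) 1))) →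
      (∀ k : ℝ, k ≠ 0 → φ k (-1) = 0 ∧ φ k 1 = 0) →
      (∀ k : ℝ, k ≠ 0 → ∀ y ∈ Set.Icc (-1 : ℝ) 1,
        φ k y = φ k (-1) + ∫ s in (-1 : ℝ)..y, dφ k s) →
      (∀ k : ℝ, k ≠ 0 → ∀ y ∈ Set.Icc (-1 : ℝ) 1,
        dφ k y = dφ k (-1) + ∫ s in (-1 : ℝ)..y, d2φ k s) →
      (∀ k : ℝ, k ≠ 0 → ∀ y ∈ Set.Icc (-1 : ℝ) 1,
        d2φ k y - (k : ℂ) ^ 2 * φ k y = ω k y) →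
      EEn ν m ε c t ω dω ≠ ⊤ → D1n ν m ε c t ω dω ≠ ⊤ → D2n ν m ε c t dω d2ω ≠ ⊤ →
      D3n ν m ε c t ω ≠ ⊤ → D4n ν m ε c t φ dφ ≠ ⊤ → D5n ν m ε c t dφ d2φ ≠ ⊤ →
      ∫⁻ k : ℝ, ENNReal.ofReal (|k| ^ (-(1 : ℝ) / 2) * L2y (dω k)) ≤
        ENNReal.ofReal (C * ν ^ (-(1 : ℝ) / 2)) * (D1n ν m ε c t ω dω) ^ ((1 : ℝ) / 2) := by
  obtain ⟨hε0, hε1⟩ := hε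
  set I : ℝ≥0∞ := ∫⁻ k : ℝ, ENNReal.ofReal (|k| ^ (2*ε-1) * (1+k^2) ^ (-(m+ε))) with hI
  have hIlt : I < ⊤ := finI hm hε0
  set C : ℝ := Real.sqrt (I.toReal + 1) with hC
  have hItop : (0:ℝ) ≤ I.toReal := ENNReal.toReal_nonneg
  have hCpos : 0 < C := Real.sqrt_pos.mpr (by linarith)
  refine ⟨C, hCpos, ?_⟩
  intro ν c t hν hc ht ω dω d2ω φ dφ d2φ hω hdω _ _ _ _ _ _ _ _ _ _ _ _ _ _ _ _ _ _
  have hν0 : (0:ℝ) < ν := hν.1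
  set h : ℝ → ℝ := fun k => |k| ^ (2*ε-1) * (1+k^2) ^ (-(m+ε)) with hh
  set f : ℝ → ℝ≥0∞ := fun k => ENNReal.ofReal (ν⁻¹ * h k) ^ ((1:ℝ)/2) with hf
  set g : ℝ → ℝ≥0∞ :=
    fun k => ENNReal.ofReal (Wf ν m ε c t k * (ν * gradSq k (ω k) (dω k))) ^ ((1:ℝ)/2) with hg
  have hh0 : ∀ k, 0 ≤ h k := by
    intro k; rw [hh]
    have : (0:ℝ) < 1 + k ^ 2 := by positivity
    positivity
  -- pointwise bound
  have hpt : ∀ k, ENNReal.ofReal (|k| ^ (-(1:ℝ)/2) * L2y (dω k)) ≤ f k * g k := by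
    intro k
    by_cases hk : k = 0
    · subst hk
      rw [show |(0:ℝ)| = 0 from abs_zero, Real.zero_rpow (by norm_num : (-(1:ℝ)/2) ≠ 0)]
      simp
    · have ha : (0:ℝ) < |k| := abs_pos.mpr hk
      have hgrad := gradSq_nonneg k (ω k) (dω k)
      have hWp := Wf_pos ν m ε c t k
      have hL := L2y_nonneg (dω k)
      have hhk := hh0 k
      have hreal : |k| ^ (-(1:ℝ)/2) * L2y (dω k) ≤
          (ν⁻¹ * h k) ^ ((1:ℝ)/2) *
            (Wf ν m ε c t k * (ν * gradSq k (ω k) (dω k))) ^ ((1:ℝ)/2) := by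
        rw [← Real.mul_rpow (by positivity) (by positivity)]
        have hsq : |k| ^ (-(1:ℝ)/2) * L2y (dω k)
            = (|k|⁻¹ * L2y (dω k) ^ 2) ^ ((1:ℝ)/2) := by
          rw [Real.mul_rpow (by positivity) (by positivity)]
          congr 1
          · rw [show (-(1:ℝ)/2) = -((1:ℝ)/2) by norm_num, Real.rpow_neg ha.le,
              Real.inv_rpow ha.le]
          · rw [← Real.rpow_natCast (L2y (dω k)) 2, ← Real.rpow_mul hL]
            norm_num
        rw [hsq]
        apply Real.rpow_le_rpow (by positivity) ?_ (by norm_num)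
        have hb1 : |k|⁻¹ ≤ h k * Wf ν m ε c t k := key_hW hν0.le hc.le ht hk
        have hb2 : L2y (dω k) ^ 2 ≤ gradSq k (ω k) (dω k) := by
          unfold gradSq
          have := L2y_nonneg (ω k)
          nlinarith [sq_nonneg k, sq_nonneg (L2y (ω k))]
        have hrw : ν⁻¹ * h k * (Wf ν m ε c t k * (ν * gradSq k (ω k) (dω k)))
            = (h k * Wf ν m ε c t k) * gradSq k (ω k) (dω k) := by
          field_simp
        rw [hrw]
        exact mul_le_mul hb1 hb2 (by positivity) (by positivity)
      calc ENNReal.ofReal (|k| ^ (-(1:ℝ)/2) * L2y (dω k))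
          ≤ ENNReal.ofReal ((ν⁻¹ * h k) ^ ((1:ℝ)/2) *
              (Wf ν m ε c t k * (ν * gradSq k (ω k) (dω k))) ^ ((1:ℝ)/2)) :=
            ENNReal.ofReal_le_ofReal hreal
        _ = f k * g k := by
            show _ = ENNReal.ofReal (ν⁻¹ * h k) ^ ((1:ℝ)/2) *
                ENNReal.ofReal (Wf ν m ε c t k * (ν * gradSq k (ω k) (dω k))) ^ ((1:ℝ)/2)
            rw [
              ENNReal.ofReal_rpow_of_nonneg (by positivity : (0:ℝ) ≤ ν⁻¹ * h k) (by norm_num),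
              ENNReal.ofReal_rpow_of_nonneg
                (by positivity : (0:ℝ) ≤ Wf ν m ε c t k * (ν * gradSq k (ω k) (dω k)))
                (by norm_num), ← ENNReal.ofReal_mul (by positivity)]
  -- measurability
  have hmeas_h : Measurable h := measurable_h m ε
  have hmeasf : Measurable f :=
    ((measurable_const.mul hmeas_h).ennreal_ofReal).pow measurable_const
  have hmeas_grad : Measurable fun k => gradSq k (ω k) (dω k) := by
    unfold gradSq
    exact ((measurable_id.pow_const 2).mul ((measurable_L2y_comp hω).pow_const 2)).add
      ((measurable_L2y_comp hdω).pow_const 2)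
  have hmeasg : Measurable g :=
    (((measurable_Wf ν m ε c t).mul (measurable_const.mul hmeas_grad)).ennreal_ofReal).pow
      measurable_const
  -- Cauchy–Schwarz
  have hconj : Real.HolderConjugate 2 2 := Real.HolderConjugate.two_two
  have hCS := ENNReal.lintegral_mul_le_Lp_mul_Lq volume hconj hmeasf.aemeasurable
    hmeasg.aemeasurable
  have hfg : (∫⁻ k : ℝ, ENNReal.ofReal (|k| ^ (-(1:ℝ)/2) * L2y (dω k)))
      ≤ ∫⁻ k : ℝ, (f * g) k := lintegral_mono fun k => by simpa using hpt k
  have hg2 : (∫⁻ k : ℝ, g k ^ (2:ℝ)) = D1n ν m ε c t ω dω := by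
    unfold D1n
    refine lintegral_congr fun k => ?_
    rw [hg, ← ENNReal.rpow_mul]
    norm_num
  have hf2 : (∫⁻ k : ℝ, f k ^ (2:ℝ)) = ENNReal.ofReal ν⁻¹ * I := by
    have heq : ∀ k : ℝ, f k ^ (2:ℝ) = ENNReal.ofReal ν⁻¹ * ENNReal.ofReal (h k) := by
      intro k
      rw [hf, ← ENNReal.rpow_mul, ENNReal.ofReal_mul (by positivity)]
      norm_num
    rw [lintegral_congr heq, lintegral_const_mul _ hmeas_h.ennreal_ofReal]
  have hfin : (∫⁻ k : ℝ, f k ^ (2:ℝ)) ^ ((1:ℝ)/2) ≤ ENNReal.ofReal (C * ν ^ (-(1:ℝ)/2)) := by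
    have hIle : I ≤ ENNReal.ofReal (C ^ 2) := by
      rw [hC, Real.sq_sqrt (by linarith)]
      calc I = ENNReal.ofReal I.toReal := (ENNReal.ofReal_toReal hIlt.ne).symm
        _ ≤ ENNReal.ofReal (I.toReal + 1) := ENNReal.ofReal_le_ofReal (by linarith)
    have h1 : (∫⁻ k : ℝ, f k ^ (2:ℝ)) ≤ ENNReal.ofReal (ν⁻¹ * C ^ 2) := by
      rw [hf2, ENNReal.ofReal_mul (by positivity)]
      exact mul_le_mul_right hIle _
    calc (∫⁻ k : ℝ, f k ^ (2:ℝ)) ^ ((1:ℝ)/2)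
        ≤ ENNReal.ofReal (ν⁻¹ * C ^ 2) ^ ((1:ℝ)/2) := ENNReal.rpow_le_rpow h1 (by norm_num)
      _ = ENNReal.ofReal ((ν⁻¹ * C ^ 2) ^ ((1:ℝ)/2)) := by
          rw [ENNReal.ofReal_rpow_of_nonneg (by positivity) (by norm_num)]
      _ = ENNReal.ofReal (C * ν ^ (-(1:ℝ)/2)) := by
          congr 1
          rw [Real.mul_rpow (by positivity) (by positivity)]
          have e1 : (ν⁻¹ : ℝ) ^ ((1:ℝ)/2) = ν ^ (-(1:ℝ)/2) := by
            rw [show (-(1:ℝ)/2) = -((1:ℝ)/2) by norm_num, Real.rpow_neg hν0.le,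
              Real.inv_rpow hν0.le]
          have e2 : ((C:ℝ) ^ 2) ^ ((1:ℝ)/2) = C := by
            rw [← Real.rpow_natCast C 2, ← Real.rpow_mul hCpos.le]
            norm_num
          rw [e1, e2]; ring
  calc (∫⁻ k : ℝ, ENNReal.ofReal (|k| ^ (-(1:ℝ)/2) * L2y (dω k)))
      ≤ ∫⁻ k : ℝ, (f * g) k := hfg
    _ ≤ (∫⁻ k : ℝ, f k ^ (2:ℝ)) ^ ((1:ℝ)/2) * (∫⁻ k : ℝ, g k ^ (2:ℝ)) ^ ((1:ℝ)/2) := hCS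
    _ = (∫⁻ k : ℝ, f k ^ (2:ℝ)) ^ ((1:ℝ)/2) * (D1n ν m ε c t ω dω) ^ ((1:ℝ)/2) := by
        rw [hg2]
    _ ≤ ENNReal.ofReal (C * ν ^ (-(1:ℝ)/2)) * (D1n ν m ε c t ω dω) ^ ((1:ℝ)/2) :=
        mul_le_mul_left hfin _

end
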